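/- Let Y be a locally compact Hausdorff space and X ⊆ Y an open subset. Then the map H : 2^Y → 2^X, H(A) = A ∩ X, between the hyperspaces of closed subsets equipped with the Fell topologies, is a perfect continuous surjection, and H⁻¹(∅) = {A ∈ 2^Y : A ⊆ Y ∖ X}. -/
import Mathlib


/-- The hyperspace of closed subsets of a topological space (including `∅`). -/
abbrev HClosed (Z : Type*) [TopologicalSpace Z] := {A : Set Z // IsClosed A}

/-- The Fell topology on the hyperspace of closed subsets: generated by the sets
`{A | A ∩ W ≠ ∅}` for `W` open and `{A | A ∩ K = ∅}` for `K` compact. -/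
def fellTop (Z : Type*) [TopologicalSpace Z] : TopologicalSpace (HClosed Z) :=
  TopologicalSpace.generateFrom
    ({s | ∃ W : Set Z, IsOpen W ∧ s = {A : HClosed Z | ((A : Set Z) ∩ W).Nonempty}} ∪
     {s | ∃ K : Set Z, IsCompact K ∧ s = {A : HClosed Z | (A : Set Z) ∩ K = ∅}})

open Set Filter TopologicalSpace Topology

section Fell
variable {Z : Type*} [TopologicalSpace Z]

lemma fell_open_W {W : Set Z} (hW : IsOpen W) :
    IsOpen[fellTop Z] {A : HClosed Z | ((A : Set Z) ∩ W).Nonempty} :=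
  TopologicalSpace.GenerateOpen.basic _ (Or.inl ⟨W, hW, rfl⟩)

lemma fell_open_K {K : Set Z} (hK : IsCompact K) :
    IsOpen[fellTop Z] {A : HClosed Z | (A : Set Z) ∩ K = ∅} :=
  TopologicalSpace.GenerateOpen.basic _ (Or.inr ⟨K, hK, rfl⟩)

lemma fell_compactSpace : @CompactSpace (HClosed Z) (fellTop Z) := by
  letI := fellTop Z
  constructor
  rw [isCompact_iff_ultrafilter_le_nhds]
  intro U _
  classical
  set A : Set Z := {y | ∀ W : Set Z, IsOpen W → y ∈ W →
      {F : HClosed Z | ((F : Set Z) ∩ W).Nonempty} ∈ U} with hAdef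
  have hA : IsClosed A := by
    rw [← isOpen_compl_iff, isOpen_iff_forall_mem_open]
    intro y hy
    simp only [mem_compl_iff, hAdef, mem_setOf_eq, not_forall] at hy
    obtain ⟨W, hW, hyW, hWU⟩ := hy
    exact ⟨W, fun z hz hzA => hWU (hzA W hW hz), hW, hyW⟩
  refine ⟨⟨A, hA⟩, mem_univ _, ?_⟩
  rw [fellTop, nhds_generateFrom]
  simp only [le_iInf_iff, le_principal_iff]
  rintro s ⟨hs, hmem⟩
  rcases hmem with ⟨W, hW, rfl⟩ | ⟨K, hK, rfl⟩
  · obtain ⟨y, hyA, hyW⟩ := hs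
    exact hyA W hW hyW
  · -- A ∩ K = ∅; each y ∈ K has open W_y with {F | F ∩ W_y ≠ ∅} ∉ U
    have key : ∀ y ∈ K, ∃ W : Set Z, IsOpen W ∧ y ∈ W ∧
        {F : HClosed Z | (F : Set Z) ∩ W = ∅} ∈ U := by
      intro y hyK
      have hyA : y ∉ A := fun h => (eq_empty_iff_forall_notMem.mp hs y) ⟨h, hyK⟩
      simp only [hAdef, mem_setOf_eq, not_forall] at hyA
      obtain ⟨W, hW, hyW, hWU⟩ := hyA
      refine ⟨W, hW, hyW, ?_⟩
      have := (Ultrafilter.compl_mem_iff_notMem (s := {F : HClosed Z | ((F : Set Z) ∩ W).Nonempty}) (f := U)).mpr hWU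
      convert this using 1
      ext F
      simp [Set.not_nonempty_iff_eq_empty]
    choose! W hWopen hyW hWU using key
    have hcover : K ⊆ ⋃ y ∈ K, W y := fun y hy => mem_biUnion hy (hyW y hy)
    obtain ⟨T, hTK, hTfin, hTcover⟩ :=
      hK.elim_finite_subcover_image (fun y hy => hWopen y hy) hcover
    have hmemU : (⋂ y ∈ T, {F : HClosed Z | (F : Set Z) ∩ W y = ∅}) ∈ U :=
      (Filter.biInter_mem hTfin).mpr fun y hy => hWU y (hTK hy)
    refine Filter.mem_of_superset hmemU ?_
    intro F hF
    simp only [mem_iInter, mem_setOf_eq] at hF ⊢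
    rw [← Set.subset_empty_iff]
    intro x hx
    obtain ⟨y, hyT, hxy⟩ := by
      have := hTcover hx.2
      simpa using this
    have : x ∈ (F : Set Z) ∩ W y := ⟨hx.1, hxy⟩
    rw [hF y hyT] at this
    exact this

lemma fell_t2 [T2Space Z] [LocallyCompactSpace Z] : @T2Space (HClosed Z) (fellTop Z) := by
  letI := fellTop Z
  have sep : ∀ A B : HClosed Z, ∀ x : Z, x ∈ (A : Set Z) → x ∉ (B : Set Z) →
      ∃ u v : Set (HClosed Z), IsOpen u ∧ IsOpen v ∧ A ∈ u ∧ B ∈ v ∧ Disjoint u v := by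
    intro A B x hxA hxB
    obtain ⟨K, hKcomp, hxK, hKB⟩ := exists_compact_subset B.2.isOpen_compl hxB
    refine ⟨{F : HClosed Z | ((F : Set Z) ∩ interior K).Nonempty},
        {F : HClosed Z | (F : Set Z) ∩ K = ∅},
        fell_open_W isOpen_interior, fell_open_K hKcomp, ⟨x, hxA, hxK⟩, ?_, ?_⟩
    · show (B : Set Z) ∩ K = ∅
      rw [← Set.subset_empty_iff]
      intro z hz
      exact absurd hz.1 (by simpa using hKB hz.2)
    · rw [Set.disjoint_left]
      rintro F ⟨z, hzF, hzK⟩ hF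
      have : z ∈ (F : Set Z) ∩ K := ⟨hzF, interior_subset hzK⟩
      rw [hF] at this
      exact this
  constructor
  intro A B hAB
  have : ∃ x, (x ∈ (A : Set Z) ∧ x ∉ (B : Set Z)) ∨ (x ∈ (B : Set Z) ∧ x ∉ (A : Set Z)) := by
    by_contra h
    push_neg at h
    exact hAB (Subtype.ext (Set.ext fun x => ⟨(h x).1, (h x).2⟩))
  obtain ⟨x, ⟨h1, h2⟩ | ⟨h1, h2⟩⟩ := this
  · obtain ⟨u, v, hu, hv, hAu, hBv, hd⟩ := sep A B x h1 h2
    exact ⟨u, v, hu, hv, hAu, hBv, hd⟩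
  · obtain ⟨u, v, hu, hv, hBu, hAv, hd⟩ := sep B A x h1 h2
    exact ⟨v, u, hv, hu, hAv, hBu, hd.symm⟩

end Fell

lemma preim_inter_nonempty {X : Set Z} {S : Set Z} {W : Set X} :
    ((Subtype.val ⁻¹' S : Set X) ∩ W).Nonempty ↔ (S ∩ (Subtype.val '' W)).Nonempty := by
  constructor
  · rintro ⟨x, hx1, hx2⟩
    exact ⟨x.1, hx1, ⟨x, hx2, rfl⟩⟩
  · rintro ⟨y, hy, x, hxW, rfl⟩
    exact ⟨x, hy, hxW⟩

/-- For a locally compact Hausdorff space `Y` and an open subset `X ⊆ Y`, the map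
`H : 2^Y → 2^X`, `H(A) = A ∩ X`, of Fell hyperspaces is a perfect continuous surjection
and `H⁻¹(∅) = {A | A ⊆ Y \ X}`. -/
theorem stmt_6 {Y : Type*} [TopologicalSpace Y] [T2Space Y] [LocallyCompactSpace Y]
    (X : Set Y) (hX : IsOpen X)
    (H : HClosed Y → HClosed X)
    (hH : ∀ A : HClosed Y, (H A : Set X) = Subtype.val ⁻¹' (A : Set Y)) :
    @Continuous _ _ (fellTop Y) (fellTop X) H ∧
    @IsClosedMap _ _ (fellTop Y) (fellTop X) H ∧
    (∀ B : HClosed X, @IsCompact _ (fellTop Y) (H ⁻¹' {B})) ∧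
    Function.Surjective H ∧
    H ⁻¹' {(⟨∅, isClosed_empty⟩ : HClosed X)} = {A : HClosed Y | (A : Set Y) ⊆ Xᶜ} := by
  letI : TopologicalSpace (HClosed Y) := fellTop Y
  letI : TopologicalSpace (HClosed X) := fellTop X
  haveI : CompactSpace (HClosed Y) := fell_compactSpace
  haveI : LocallyCompactSpace X := hX.locallyCompactSpace
  haveI : T2Space (HClosed X) := fell_t2
  have hcont : Continuous[fellTop Y, fellTop X] H := by
    delta fellTop
    rw [continuous_generateFrom_iff]
    rintro s (⟨W, hW, rfl⟩ | ⟨K, hK, rfl⟩)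
    · have : H ⁻¹' {B : HClosed X | ((B : Set X) ∩ W).Nonempty}
          = {A : HClosed Y | ((A : Set Y) ∩ (Subtype.val '' W)).Nonempty} := by
        ext A
        simp only [Set.mem_preimage, Set.mem_setOf_eq, hH A]
        exact preim_inter_nonempty
      rw [this]
      exact fell_open_W (hX.isOpenMap_subtype_val W hW)
    · have : H ⁻¹' {B : HClosed X | (B : Set X) ∩ K = ∅}
          = {A : HClosed Y | (A : Set Y) ∩ (Subtype.val '' K) = ∅} := by
        ext A
        simp only [Set.mem_preimage, Set.mem_setOf_eq, hH A,
          ← Set.not_nonempty_iff_eq_empty]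
        exact not_congr preim_inter_nonempty
      rw [this]
      exact fell_open_K (hK.image continuous_subtype_val)
  have hsurj : Function.Surjective H := by
    intro B
    refine ⟨⟨closure (Subtype.val '' (B : Set X)), isClosed_closure⟩, ?_⟩
    obtain ⟨C, hC, hCB⟩ := isClosed_induced_iff.mp B.2
    apply Subtype.ext
    rw [hH]
    apply Set.Subset.antisymm
    · intro x hx
      have : (x : Y) ∈ C := closure_minimal (by rw [← hCB]; rintro y ⟨z, hz, rfl⟩; exact hz) hC hx
      rw [← hCB]; exact this
    · intro x hx
      exact subset_closure ⟨x, hx, rfl⟩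
  refine ⟨hcont, hcont.isClosedMap, fun B => ?_, hsurj, ?_⟩
  · exact ((isClosed_singleton.preimage hcont)).isCompact
  · ext A
    simp only [Set.mem_preimage, Set.mem_singleton_iff, Set.mem_setOf_eq,
      Subtype.ext_iff, hH A]
    constructor
    · intro h y hyA
      intro hyX
      exact absurd (show (⟨y, hyX⟩ : X) ∈ (Subtype.val ⁻¹' (A : Set Y)) from hyA)
        (by rw [h]; exact Set.notMem_empty _)
    · intro h
      ext x
      simp only [Set.mem_preimage, Set.mem_empty_iff_false, iff_false]
      exact fun hx => h hx x.2
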